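/- Let α_uni : Z^d → GL_m(Q) be a homomorphism whose image consists of unipotent matrices, and suppose a subspace V ⊆ Q^m is invariant under α_uni(n) for all n in some finite-index subgroup Λ ≤ Z^d. Then V is invariant under α_uni(n) for all n ∈ Z^d. -/

import Mathlib

open Finset in
private lemma bin_expand {R : Type*} [CommRing R] (s e : R) (M : ℕ) :
    (s + e) ^ (M + 1) = s ^ (M + 1) + (M + 1 : ℕ) * (s ^ M * e) +
      e ^ 2 * ∑ k ∈ range M, s ^ k * e ^ (M - 1 - k) * ((M + 1).choose k : R) := by
  rw [add_pow, sum_range_succ, sum_range_succ, mul_sum]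
  rw [Nat.choose_succ_self_right, Nat.choose_self]
  have : ∀ k ∈ range M, s ^ k * e ^ (M + 1 - k) * ((M + 1).choose k : R)
      = e ^ 2 * (s ^ k * e ^ (M - 1 - k) * ((M + 1).choose k : R)) := by
    intro k hk
    have hk' : k < M := mem_range.mp hk
    have : M + 1 - k = (M - 1 - k) + 2 := by omega
    rw [this, pow_add]; ring
  rw [sum_congr rfl this, Nat.add_sub_cancel_left, Nat.sub_self]
  push_cast
  ring

private lemma geom_inv {R : Type*} [CommRing R] {a : R} {s : ℕ} (h : a ^ s = 0) :
    (∑ k ∈ Finset.range s, (-a) ^ k) * (1 + a) = 1 := by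
  have := geom_sum_mul (-a) s
  rw [neg_pow, h, mul_zero, zero_sub] at this
  linear_combination -this

private lemma one_add_mem_adjoin_pow {R : Type*} [CommRing R] [Algebra ℚ R]
    {x : R} (hx : IsNilpotent x) {N : ℕ} (hN : N ≠ 0) :
    (1 + x) ∈ Algebra.adjoin ℚ {(1 + x) ^ N} := by
  set A := Algebra.adjoin ℚ {(1 + x) ^ N} with hA
  obtain ⟨M, rfl⟩ := Nat.exists_eq_succ_of_ne_zero hN
  set ν : R := algebraMap ℚ R ((M + 1 : ℚ)⁻¹) with hν
  have hνN : ν * ((M + 1 : ℕ) : R) = 1 := by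
    rw [hν]
    have : ((M + 1 : ℕ) : R) = algebraMap ℚ R ((M + 1 : ℕ) : ℚ) := by
      simp
    rw [this, ← map_mul]
    rw [show ((M + 1 : ℚ)⁻¹ * ((M + 1 : ℕ) : ℚ)) = 1 by
      push_cast
      field_simp]
    simp
  -- the Newton iteration
  have key : ∀ j : ℕ, ∃ a ∈ A, ∃ c : R, x - a = c * x ^ (j + 1) := by
    intro j
    induction j with
    | zero => exact ⟨0, zero_mem A, 1, by ring⟩
    | succ j ih =>
      obtain ⟨a, haA, c, hc⟩ := ih
      have ha : IsNilpotent a := by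
        have hae : a = (1 - c * x ^ j) * x := by
          rw [pow_succ] at hc; linear_combination -hc
        rw [hae]
        exact (Commute.all _ _).isNilpotent_mul_left hx
      obtain ⟨s, hs⟩ := ha
      set v : R := ∑ k ∈ Finset.range s, (-a) ^ k with hvdef
      have hv : v * (1 + a) = 1 := geom_inv hs
      have hvA : v ∈ A := Subalgebra.sum_mem A fun k _ =>
        Subalgebra.pow_mem A (Subalgebra.neg_mem A haA) k
      set T : R := ∑ k ∈ Finset.range M, (1 + a) ^ k * (x - a) ^ (M - 1 - k) *
        ((M + 1).choose k : R) with hT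
      have hbin : (1 + x) ^ (M + 1) = (1 + a) ^ (M + 1) +
          (M + 1 : ℕ) * ((1 + a) ^ M * (x - a)) + (x - a) ^ 2 * T := by
        have h1 : (1 : R) + x = (1 + a) + (x - a) := by ring
        rw [h1, bin_expand]
      have hvM : v ^ M * (1 + a) ^ M = 1 := by rw [← mul_pow, hv, one_pow]
      refine ⟨a + ν * v ^ M * ((1 + x) ^ (M + 1) - (1 + a) ^ (M + 1)), ?_, ?_⟩
      · exact add_mem haA (mul_mem (mul_mem (Subalgebra.algebraMap_mem A _)
          (pow_mem hvA M)) (sub_mem (Algebra.self_mem_adjoin_singleton ℚ _)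
          (pow_mem (add_mem (one_mem A) haA) (M + 1))))
      · refine ⟨-(ν * v ^ M * T) * (c ^ 2 * x ^ j), ?_⟩
        have he2 : (x - a) ^ 2 = (c ^ 2 * x ^ j) * x ^ (j + 2) := by
          rw [hc]; ring
        linear_combination (-(ν * v ^ M)) * hbin - (x - a) * (((M + 1 : ℕ) : R) * ν) * hvM
          - (x - a) * hνN + (-(ν * v ^ M * T)) * he2
  obtain ⟨r, hr⟩ := hx
  obtain ⟨a, haA, c, hc⟩ := key r
  rw [pow_succ, hr, zero_mul, mul_zero, sub_eq_zero] at hc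
  exact add_mem (one_mem A) (hc ▸ haA)

private lemma mem_adjoin_pow {R : Type*} [Ring R] [Algebra ℚ R]
    (g : R) (hg : IsNilpotent (g - 1)) {N : ℕ} (hN : N ≠ 0) :
    g ∈ Algebra.adjoin ℚ {g ^ N} := by
  obtain ⟨r, hr⟩ := hg
  set I : Ideal (Polynomial ℚ) := Ideal.span {Polynomial.X ^ r} with hI
  have hcond : ∀ p ∈ I, Polynomial.aeval (g - 1) p = 0 := by
    intro p hp
    obtain ⟨q, hq⟩ := Ideal.mem_span_singleton'.mp hp
    rw [← hq, map_mul, map_pow, Polynomial.aeval_X, hr, mul_zero]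
  set ψ : (Polynomial ℚ ⧸ I) →ₐ[ℚ] R :=
    Ideal.Quotient.liftₐ I (Polynomial.aeval (g - 1)) hcond with hψ
  set x₀ : Polynomial ℚ ⧸ I := Ideal.Quotient.mk I Polynomial.X with hx₀
  have hxnil : IsNilpotent x₀ := ⟨r, by
    rw [hx₀, ← map_pow, Ideal.Quotient.eq_zero_iff_mem]
    exact Ideal.subset_span rfl⟩
  have hmem := one_add_mem_adjoin_pow hxnil hN
  have hg' : ψ (1 + x₀) = g := by
    rw [map_add, map_one, hx₀, hψ, Ideal.Quotient.liftₐ_apply]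
    show (1 : R) + Polynomial.aeval (g - 1) (Polynomial.X : Polynomial ℚ) = g
    simp
  have hmap := Subalgebra.mem_map.mpr ⟨1 + x₀, hmem, hg'⟩
  rwa [AlgHom.map_adjoin, Set.image_singleton, map_pow, hg'] at hmap

open Matrix

/-- Let `α_uni : ℤ^d → GL_m(ℚ)` be a homomorphism whose image consists of unipotent
matrices.  If a ℚ-subspace `V ⊆ ℚ^m` is invariant under `α_uni(n)` for all `n` in a
finite-index subgroup `Λ ≤ ℤ^d`, then it is invariant under `α_uni(n)` for all
`n ∈ ℤ^d`. -/
theorem stmt_11 {m d : ℕ} (α : (Fin d → ℤ) → GL (Fin m) ℚ)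
    (hhom : ∀ a b : Fin d → ℤ, α (a + b) = α a * α b)
    (huni : ∀ n : Fin d → ℤ, IsNilpotent ((α n : Matrix (Fin m) (Fin m) ℚ) - 1))
    (Λ : AddSubgroup (Fin d → ℤ)) (hΛ : Λ.index ≠ 0)
    (V : Submodule ℚ (Fin m → ℚ))
    (hV : ∀ n ∈ Λ, ∀ x ∈ V, (α n : Matrix (Fin m) (Fin m) ℚ).mulVec x ∈ V) :
    ∀ n : Fin d → ℤ, ∀ x ∈ V, (α n : Matrix (Fin m) (Fin m) ℚ).mulVec x ∈ V := by
  intro n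
  -- the subalgebra of matrices preserving V
  set S : Subalgebra ℚ (Matrix (Fin m) (Fin m) ℚ) :=
    { carrier := {M | ∀ x ∈ V, M.mulVec x ∈ V}
      mul_mem' := by
        intro A B hA hB x hx
        rw [← Matrix.mulVec_mulVec]
        exact hA _ (hB _ hx)
      add_mem' := by
        intro A B hA hB x hx
        rw [Matrix.add_mulVec]
        exact V.add_mem (hA _ hx) (hB _ hx)
      algebraMap_mem' := by
        intro c x hx
        have : (algebraMap ℚ (Matrix (Fin m) (Fin m) ℚ) c) = c • (1 : Matrix (Fin m) (Fin m) ℚ) :=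
          Algebra.algebraMap_eq_smul_one c
        rw [this, Matrix.smul_mulVec, Matrix.one_mulVec]
        exact V.smul_mem c hx } with hS
  -- powers of α
  have hpow : ∀ (k : ℕ), α (k • n) = (α n) ^ k := by
    intro k
    induction k with
    | zero =>
      have h0 := hhom 0 0
      rw [add_zero] at h0
      have h1 : α 0 * 1 = α 0 * α 0 := by rw [mul_one, ← h0]
      have h2 : α 0 = 1 := (mul_left_cancel h1).symm
      simpa using h2
    | succ k ih =>
      rw [succ_nsmul, hhom, ih, pow_succ]
  set N := Λ.index with hN
  have hmemS : ((α n : Matrix (Fin m) (Fin m) ℚ)) ^ N ∈ S := by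
    have h1 : ((α n) ^ N : GL (Fin m) ℚ) = α (N • n) := (hpow N).symm
    have h2 : ((α n : Matrix (Fin m) (Fin m) ℚ)) ^ N
        = ((α (N • n) : Matrix (Fin m) (Fin m) ℚ)) := by
      rw [← h1]
      exact (Units.val_pow_eq_pow_val _ _).symm
    rw [h2]
    exact hV _ (AddSubgroup.nsmul_index_mem Λ n)
  have hadj := mem_adjoin_pow ((α n : Matrix (Fin m) (Fin m) ℚ)) (huni n) (N := N) hΛ
  have hle : Algebra.adjoin ℚ {((α n : Matrix (Fin m) (Fin m) ℚ)) ^ N} ≤ S :=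
    Algebra.adjoin_le (Set.singleton_subset_iff.mpr hmemS)
  exact hle hadj
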